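/- For every integer r ≥ 5, every maximum matching M of the graph F_{2r} leaves at least two vertices unsaturated, and any two distinct M-unsaturated vertices have a common neighbor. -/

import Mathlib

/-- A matching `M` of `G` is maximum if no matching of `G` has more edges. -/
def SimpleGraph.IsMaximumMatching {α : Type*} (G : SimpleGraph α) (M : G.Subgraph) : Prop :=
  M.IsMatching ∧ ∀ M' : G.Subgraph, M'.IsMatching → M'.edgeSet.ncard ≤ M.edgeSet.ncard

/-- The (underlying simple) graph `F_n` of the paper (used with `n = r`):
the vertices `x, y, z` are encoded as `Sum.inl 0, Sum.inl 1, Sum.inl 2`, the vertex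
`v_{k+1}^{(i)}` is encoded as `Sum.inr (k, i)`; `x` is joined to every `v_1^{(i)}` and
`v_2^{(i)}`, `y` to every `v_1^{(i)}` and `v_3^{(i)}`, `z` to every `v_2^{(i)}` and
`v_3^{(i)}` (i.e. `Sum.inl k` is joined to `Sum.inr (k', i)` iff `k + k' ≠ 2`), and
for each `i` the vertices `v_1^{(i)}, v_2^{(i)}, v_3^{(i)}` form a triangle. -/
def FGraph (n : ℕ) : SimpleGraph (Fin 3 ⊕ Fin 3 × Fin n) where
  Adj a b :=
    match a, b with
    | .inl k, .inr p => (k : ℕ) + (p.1 : ℕ) ≠ 2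
    | .inr p, .inl k => (k : ℕ) + (p.1 : ℕ) ≠ 2
    | .inr p, .inr q => p.2 = q.2 ∧ p.1 ≠ q.1
    | _, _ => False
  symm := by
    constructor
    rintro (k | p) (k' | q) h
    · exact h
    · exact h
    · exact h
    · exact ⟨h.1.symm, h.2.symm⟩
  loopless := by
    constructor
    rintro (k | p) h
    · exact h
    · exact h.2 rfl

lemma fadj_hub {r : ℕ} {k : Fin 3} {p : Fin 3 × Fin r} :
    (FGraph r).Adj (.inl k) (.inr p) ↔ (k : ℕ) + (p.1 : ℕ) ≠ 2 := Iff.rfl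

lemma fadj_hub' {r : ℕ} {k : Fin 3} {p : Fin 3 × Fin r} :
    (FGraph r).Adj (.inr p) (.inl k) ↔ (k : ℕ) + (p.1 : ℕ) ≠ 2 := Iff.rfl

lemma fadj_tri {r : ℕ} {p q : Fin 3 × Fin r} :
    (FGraph r).Adj (.inr p) (.inr q) ↔ p.2 = q.2 ∧ p.1 ≠ q.1 := Iff.rfl

/-- Every maximum matching `M` of `F_{2r}` leaves at least two vertices unsaturated,
and any two distinct `M`-unsaturated vertices have a common neighbor. -/
theorem stmt_15 (r : ℕ) (hr : 5 ≤ r) (M : (FGraph r).Subgraph)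
    (hM : (FGraph r).IsMaximumMatching M) :
    (∃ a b, a ≠ b ∧ (∀ c, ¬ M.Adj a c) ∧ (∀ c, ¬ M.Adj b c)) ∧
    (∀ a b, a ≠ b → (∀ c, ¬ M.Adj a c) → (∀ c, ¬ M.Adj b c) →
      ∃ w, (FGraph r).Adj w a ∧ (FGraph r).Adj w b) := by
  classical
  obtain ⟨hmatch, -⟩ := hM
  have uniq : ∀ {v a b : Fin 3 ⊕ Fin 3 × Fin r}, M.Adj v a → M.Adj v b → a = b := by
    intro v a b hva hvb
    obtain ⟨w, -, hu⟩ := hmatch (M.edge_vert hva)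
    rw [hu _ hva, hu _ hvb]
  constructor
  · set t : Fin 3 → Option (Fin r) := fun k =>
      if h : ∃ p : Fin 3 × Fin r, M.Adj (.inl k) (.inr p) then some h.choose.2 else none
      with ht
    have key : ∀ i : Fin r, (∀ k, t k ≠ some i) →
        ∃ k : Fin 3, ∀ c, ¬ M.Adj (.inr (k, i)) c := by
      intro i hi
      have nohub : ∀ (k : Fin 3) (k' : Fin 3), ¬ M.Adj (.inl k) (.inr (k', i)) := by
        intro k k' hadj
        have hex : ∃ p : Fin 3 × Fin r, M.Adj (.inl k) (.inr p) := ⟨(k', i), hadj⟩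
        have h1 : M.Adj (.inl k) (.inr hex.choose) := hex.choose_spec
        have h2 : hex.choose = (k', i) := Sum.inr.inj (uniq h1 hadj)
        apply hi k
        rw [ht]
        simp only [dif_pos hex, h2]
      by_contra hcon
      push_neg at hcon
      choose c hc using hcon
      have hinr : ∀ k : Fin 3, ∃ l : Fin 3, l ≠ k ∧ c k = .inr (l, i) := by
        intro k
        have hadj := hc k
        have hG := M.adj_sub hadj
        match hck : c k with
        | .inl m =>
          exfalso
          rw [hck] at hadj
          exact nohub m k hadj.symm
        | .inr q =>
          rw [hck] at hG
          obtain ⟨h1, h2⟩ := fadj_tri.mp hG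
          exact ⟨q.1, fun hl => h2 hl.symm, congrArg Sum.inr (Prod.ext_iff.mpr ⟨rfl, h1.symm⟩)⟩
      choose l hl using hinr
      have hinv : ∀ k : Fin 3, l (l k) = k := by
        intro k
        have h1 : M.Adj (.inr (k, i)) (.inr (l k, i)) := by
          have := hc k; rwa [(hl k).2] at this
        have h2 : M.Adj (.inr (l k, i)) (.inr (l (l k), i)) := by
          have := hc (l k); rwa [(hl (l k)).2] at this
        have := uniq h2 h1.symm
        have := (Sum.inr.inj this)
        exact (Prod.ext_iff.mp this).1
      have : ∀ f : Fin 3 → Fin 3, (∀ k, f k ≠ k) → ∃ k, f (f k) ≠ k := by decide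
      obtain ⟨k, hk⟩ := this l (fun k => (hl k).1)
      exact hk (hinv k)
    -- counting: the set of "hubbed" triangles has size ≤ 3
    set T : Finset (Fin r) := Finset.univ.filter fun i : Fin r => ∃ k, t k = some i with hT
    have hTcard : T.card ≤ 3 := by
      have h1 : T.card ≤ (Finset.univ.image t).card := by
        apply Finset.card_le_card_of_injOn (fun i => some i)
        · intro i hi
          simp only [hT, Finset.mem_coe, Finset.mem_filter] at hi
          obtain ⟨k, hk⟩ := hi.2
          exact Finset.mem_image.mpr ⟨k, Finset.mem_univ k, hk⟩
        · intro a _ b _ h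
          exact Option.some.inj h
      calc T.card ≤ (Finset.univ.image t).card := h1
        _ ≤ (Finset.univ : Finset (Fin 3)).card := Finset.card_image_le
        _ = 3 := by simp
    have hcompl : 1 < Tᶜ.card := by
      have := Finset.card_compl T
      have hcu : Fintype.card (Fin r) = r := Fintype.card_fin r
      omega
    obtain ⟨i, hi, j, hj, hij⟩ := Finset.one_lt_card.mp hcompl
    have hi' : ∀ k, t k ≠ some i := by
      intro k hk
      simp only [hT, Finset.mem_compl, Finset.mem_filter, Finset.mem_univ, true_and] at hi
      exact hi ⟨k, hk⟩
    have hj' : ∀ k, t k ≠ some j := by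
      intro k hk
      simp only [hT, Finset.mem_compl, Finset.mem_filter, Finset.mem_univ, true_and] at hj
      exact hj ⟨k, hk⟩
    obtain ⟨ki, hki⟩ := key i hi'
    obtain ⟨kj, hkj⟩ := key j hj'
    refine ⟨.inr (ki, i), .inr (kj, j), ?_, hki, hkj⟩
    intro h
    exact hij (congrArg Prod.snd (Sum.inr.inj h))
  · intro a b hab ha hb
    have L1 : ∀ k k' : Fin 3, ∃ c : Fin 3,
        (c : ℕ) + (k : ℕ) ≠ 2 ∧ (c : ℕ) + (k' : ℕ) ≠ 2 := by decide
    have L2 : ∀ k k' : Fin 3, ∃ c : Fin 3, c ≠ k' ∧ (k : ℕ) + (c : ℕ) ≠ 2 := by decide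
    match a, b with
    | .inl k, .inl k' =>
      obtain ⟨c, h1, h2⟩ := L1 k k'
      have hc1 : (k : ℕ) + (c : ℕ) ≠ 2 := by omega
      have hc2 : (k' : ℕ) + (c : ℕ) ≠ 2 := by omega
      exact ⟨.inr (c, ⟨0, by omega⟩), fadj_hub'.mpr hc1, fadj_hub'.mpr hc2⟩
    | .inl k, .inr q =>
      obtain ⟨c, h1, h2⟩ := L2 k q.1
      refine ⟨.inr (c, q.2), fadj_hub'.mpr h2, fadj_tri.mpr ⟨rfl, h1⟩⟩
    | .inr q, .inl k =>
      obtain ⟨c, h1, h2⟩ := L2 k q.1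
      refine ⟨.inr (c, q.2), fadj_tri.mpr ⟨rfl, h1⟩, fadj_hub'.mpr h2⟩
    | .inr p, .inr q =>
      obtain ⟨c, h1, h2⟩ := L1 p.1 q.1
      exact ⟨.inl c, fadj_hub.mpr h1, fadj_hub.mpr h2⟩
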